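/- Let H be a 2-dimensional complex Hilbert space. Then there exists a non-negative frame function f : S(H) → ℝ for which there is no self-adjoint operator T : H → H with f(v) = ⟨v|T|v⟩ for all v ∈ S(H). -/
import Mathlib


open scoped ComplexInnerProductSpace

/-- Gleason's theorem fails in dimension `2`: on a `2`-dimensional complex Hilbert
space `H` there is a non-negative frame function `f : S(H) → ℝ` (i.e. for some weight
`w`, every orthonormal basis `(v i)` of `H` satisfies `∑ i, f (v i) = w`) which is not
of the form `v ↦ ⟨v|T|v⟩` for any self-adjoint operator `T : H → H`. -/
theorem unentangled_gleason_stmt17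
    {H : Type*} [NormedAddCommGroup H] [InnerProductSpace ℂ H]
    (hdim : Module.finrank ℂ H = 2) :
    ∃ f : H → ℝ,
      (∀ v : H, ‖v‖ = 1 → 0 ≤ f v) ∧
      (∃ w : ℝ, ∀ v : OrthonormalBasis (Fin 2) ℂ H, ∑ i, f (v i) = w) ∧
      ¬ ∃ T : H →ₗ[ℂ] H, T.IsSymmetric ∧
          ∀ v : H, ‖v‖ = 1 → (f v : ℂ) = ⟪v, T v⟫ := by
  have hfd : FiniteDimensional ℂ H := FiniteDimensional.of_finrank_eq_succ hdim
  set b : OrthonormalBasis (Fin 2) ℂ H :=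
    (stdOrthonormalBasis ℂ H).reindex (finCongr hdim) with hb
  have hON := b.orthonormal
  have h00 : ⟪b 0, b 0⟫ = 1 := by simpa using orthonormal_iff_ite.mp hON 0 0
  have h01 : ⟪b 0, b 1⟫ = 0 := by simpa using orthonormal_iff_ite.mp hON 0 1
  have h10 : ⟪b 1, b 0⟫ = 0 := by simpa using orthonormal_iff_ite.mp hON 1 0
  have h11 : ⟪b 1, b 1⟫ = 1 := by simpa using orthonormal_iff_ite.mp hON 1 1
  refine ⟨fun v => 1/2 + 4*(‖⟪b 0, v⟫‖^2 - 1/2)^3, ?_, ⟨1, ?_⟩, ?_⟩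
  · intro v hv
    show (0:ℝ) ≤ 1/2 + 4*(‖⟪b 0, v⟫‖^2 - 1/2)^3
    have hs : (0:ℝ) ≤ ‖⟪b 0, v⟫‖^2 := sq_nonneg _
    nlinarith [mul_nonneg hs (sq_nonneg (2*‖⟪b 0, v⟫‖^2 - 3/2))]
  · intro v
    have key : ∑ i, ⟪b 0, v i⟫ * ⟪v i, b 0⟫ = ⟪b 0, b 0⟫ :=
      v.sum_inner_mul_inner (b 0) (b 0)
    rw [Fin.sum_univ_two, h00, ← inner_conj_symm (v 0) (b 0),
      ← inner_conj_symm (v 1) (b 0), Complex.mul_conj', Complex.mul_conj'] at key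
    have hsum : ‖⟪b 0, v 0⟫‖^2 + ‖⟪b 0, v 1⟫‖^2 = 1 := by exact_mod_cast key
    rw [Fin.sum_univ_two]
    show (1/2 + 4*(‖⟪b 0, v 0⟫‖^2 - 1/2)^3) + (1/2 + 4*(‖⟪b 0, v 1⟫‖^2 - 1/2)^3) = 1
    set t0 := ‖⟪b 0, v 0⟫‖^2
    set t1 := ‖⟪b 0, v 1⟫‖^2
    linear_combination (4*((t0-1/2)^2 - (t0-1/2)*(t1-1/2) + (t1-1/2)^2)) * hsum
  · rintro ⟨T, hT, hf⟩
    have hn0 : ‖b 0‖ = 1 := hON.1 0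
    have hn1 : ‖b 1‖ = 1 := hON.1 1
    have nrm : ∀ x : H, ⟪x, x⟫ = 1 → ‖x‖ = 1 := by
      intro x hx
      have h := norm_eq_sqrt_re_inner (𝕜 := ℂ) x
      rw [hx] at h
      simpa using h
    -- diagonal values
    have ha : ⟪b 0, T (b 0)⟫ = 1 := by
      have h := hf (b 0) hn0
      simp only [h00, norm_one] at h
      norm_num at h
      exact h.symm
    have hd : ⟪b 1, T (b 1)⟫ = 0 := by
      have h := hf (b 1) hn1
      simp only [h01, norm_zero] at h
      norm_num at h
      exact h.symm
    set c : ℂ := ⟪b 0, T (b 1)⟫ with hc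
    have hc' : ⟪b 1, T (b 0)⟫ = (starRingEnd ℂ) c := by
      rw [hc, ← hT (b 0) (b 1), inner_conj_symm]
    -- the vector u = (e0 + e1)/√2
    set s2 : ℝ := (Real.sqrt 2)⁻¹ with hs2
    have hs2sq : s2 * s2 = 1/2 := by
      rw [hs2, ← mul_inv, Real.mul_self_sqrt (by norm_num : (0:ℝ) ≤ 2)]
      norm_num
    have hs2c : (s2:ℂ) * (s2:ℂ) = 1/2 := by
      rw [← Complex.ofReal_mul, hs2sq]; norm_num
    set u : H := ((s2:ℂ)) • (b 0 + b 1) with hu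
    have huu : ⟪u, u⟫ = 1 := by
      simp only [hu, inner_smul_left, inner_smul_right, inner_add_left, inner_add_right,
        h00, h01, h10, h11, Complex.conj_ofReal]
      linear_combination (2:ℂ) * hs2c
    have hun : ‖u‖ = 1 := nrm u huu
    have hinner_u : ⟪b 0, u⟫ = (s2 : ℂ) := by
      simp only [hu, inner_smul_right, inner_add_right, h00, h01, mul_one, mul_zero,
        add_zero, zero_add]
    have hfu : (1/2 + 4*(‖⟪b 0, u⟫‖^2 - 1/2)^3 : ℝ) = 1/2 := by
      rw [hinner_u, Complex.norm_real, Real.norm_eq_abs, sq_abs, sq, hs2sq]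
      ring_nf
    have hTu : ⟪u, T u⟫ = (s2:ℂ) * (s2:ℂ) * (1 + c + (starRingEnd ℂ) c + 0) := by
      simp only [hu, map_smul, map_add, inner_smul_left, inner_smul_right,
        inner_add_left, inner_add_right, ha, hd, ← hc, hc', Complex.conj_ofReal]
      ring
    have hcc : c + (starRingEnd ℂ) c = 0 := by
      have h := hf u hun
      simp only [hfu] at h
      rw [hTu, hs2c] at h
      push_cast at h
      linear_combination (-2:ℂ) * h
    -- the vector w = (1/2) e0 + (√3/2) e1
    set s3 : ℝ := Real.sqrt 3 / 2 with hs3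
    have hs3sq : s3 * s3 = 3/4 := by
      rw [hs3, div_mul_div_comm, Real.mul_self_sqrt (by norm_num : (0:ℝ) ≤ 3)]
      norm_num
    have hs3c : (s3:ℂ) * (s3:ℂ) = 3/4 := by
      rw [← Complex.ofReal_mul, hs3sq]; norm_num
    set w : H := ((1/2 : ℝ) : ℂ) • b 0 + ((s3:ℝ):ℂ) • b 1 with hw
    have hww : ⟪w, w⟫ = 1 := by
      simp only [hw, inner_smul_left, inner_smul_right, inner_add_left, inner_add_right,
        h00, h01, h10, h11, Complex.conj_ofReal]
      push_cast
      linear_combination hs3c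
    have hwn : ‖w‖ = 1 := nrm w hww
    have hinner_w : ⟪b 0, w⟫ = ((1/2 : ℝ) : ℂ) := by
      simp only [hw, inner_smul_right, inner_add_right, h00, h01, mul_one, mul_zero,
        add_zero, zero_add]
    have hfw : (1/2 + 4*(‖⟪b 0, w⟫‖^2 - 1/2)^3 : ℝ) = 7/16 := by
      rw [hinner_w, Complex.norm_real, Real.norm_eq_abs,
        abs_of_nonneg (by norm_num : (0:ℝ) ≤ 1/2)]
      norm_num
    have hTw : ⟪w, T w⟫ = ((1/2:ℝ):ℂ) * ((1/2:ℝ):ℂ) * 1 + ((1/2:ℝ):ℂ) * ((s3:ℝ):ℂ) * c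
        + ((s3:ℝ):ℂ) * ((1/2:ℝ):ℂ) * (starRingEnd ℂ) c + ((s3:ℝ):ℂ) * ((s3:ℝ):ℂ) * 0 := by
      simp only [hw, map_smul, map_add, inner_smul_left, inner_smul_right,
        inner_add_left, inner_add_right, ha, hd, ← hc, hc', Complex.conj_ofReal]
      ring
    have h := hf w hwn
    simp only [hfw] at h
    rw [hTw] at h
    push_cast at h
    have hfin : ((7:ℂ)/16) = 1/4 := by
      linear_combination h + ((s3:ℝ):ℂ)/2 * hcc
    norm_num at hfin
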